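/- On V ⊗ V, defining (σ₁σ₂)^{ab} := Σ_c ξ_c (σ^{ac} ⊗ 1)(1 ⊗ σ^{c̄b}) (with graded tensor action), one has the symmetry relation (σ₂σ₁)^{ba} = (−1)^{[a][b]} (σ₁σ₂)^{ab}, where (σ₂σ₁)^{ba} := Σ_c ξ_c (1 ⊗ σ^{bc})(σ^{c̄a} ⊗ 1) with factors acting on the second and first tensor slots respectively. -/

import Mathlib

open Matrix BigOperators

namespace OSP

variable (m n : ℕ)

/-- Z₂ grading (0-based index): [a] = 0 for the first m indices, 1 otherwise. -/
def gr (a : Fin (m + n)) : ℕ := if (a : ℕ) < m then 0 else 1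

/-- Sign ξ_a : +1 on the first m + n/2 indices, −1 otherwise. -/
def xi (a : Fin (m + n)) : ℚ := if (a : ℕ) < m + n / 2 then 1 else -1

/-- Conjugate index ā. -/
def conj (a : Fin (m + n)) : Fin (m + n) :=
  if h : (a : ℕ) < m then ⟨m - 1 - (a : ℕ), by omega⟩
  else ⟨2 * m + n - 1 - (a : ℕ), by have := a.isLt; omega⟩

/-- Metric g_{ab} = ξ_a δ_{a,b̄}. -/
def gmet (a b : Fin (m + n)) : ℚ := xi m n a * (if a = conj m n b then 1 else 0)

/-- Matrix unit e^{ab}. -/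
def E (a b : Fin (m + n)) : Matrix (Fin (m + n)) (Fin (m + n)) ℚ :=
  fun p q => if p = a ∧ q = b then 1 else 0

/-- osp(m|n) generators σ^{ab} = Σ_k g_{ak} e^{kb} − (−1)^{[a][b]} Σ_k g_{bk} e^{ka}. -/
def sg (a b : Fin (m + n)) : Matrix (Fin (m + n)) (Fin (m + n)) ℚ :=
  (∑ k, gmet m n a k • E m n k b)
    - ((-1 : ℚ) ^ (gr m n a * gr m n b)) • ∑ k, gmet m n b k • E m n k a

/-- Graded tensor product of operators on V ⊗ V: here d = degree of the second factor,
`(x ⊗ y)(v^r ⊗ v^s) = (−1)^{d·[r]} x v^r ⊗ y v^s`, written as a matrix on the product basis. -/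
def gt (d : ℕ) (x y : Matrix (Fin (m + n)) (Fin (m + n)) ℚ) :
    Matrix (Fin (m + n) × Fin (m + n)) (Fin (m + n) × Fin (m + n)) ℚ :=
  fun pq rs => ((-1 : ℚ) ^ (d * gr m n rs.1)) * x pq.1 rs.1 * y pq.2 rs.2

/-- σ^{ab} acting in the first tensor slot. -/
def sg1 (a b : Fin (m + n)) : Matrix (Fin (m + n) × Fin (m + n)) (Fin (m + n) × Fin (m + n)) ℚ :=
  gt m n 0 (sg m n a b) 1

/-- σ^{ab} acting in the second tensor slot (with Koszul sign, deg σ^{ab} = [a]+[b]). -/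
def sg2 (a b : Fin (m + n)) : Matrix (Fin (m + n) × Fin (m + n)) (Fin (m + n) × Fin (m + n)) ℚ :=
  gt m n (gr m n a + gr m n b) 1 (sg m n a b)

/-- Graded permutation: P(v^a ⊗ v^b) = (−1)^{[a][b]} v^b ⊗ v^a, as a matrix. -/
def Pop : Matrix (Fin (m + n) × Fin (m + n)) (Fin (m + n) × Fin (m + n)) ℚ :=
  fun pq ab => ((-1 : ℚ) ^ (gr m n ab.1 * gr m n ab.2)) *
    (if pq.1 = ab.2 ∧ pq.2 = ab.1 then 1 else 0)

/-- Q(v^a ⊗ v^b) = δ_{a,b̄} ξ_{ā} Σ_c ξ_c v^c ⊗ v^{c̄}, as a matrix. -/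
def Qop : Matrix (Fin (m + n) × Fin (m + n)) (Fin (m + n) × Fin (m + n)) ℚ :=
  fun pq ab => (if ab.1 = conj m n ab.2 then (1 : ℚ) else 0) * xi m n (conj m n ab.1) *
    (if pq.2 = conj m n pq.1 then xi m n pq.1 else 0)

/-- (σ₁σ₂)^{ab} = Σ_c ξ_c σ₁^{ac} σ₂^{c̄b}. -/
def S12 (a b : Fin (m + n)) : Matrix (Fin (m + n) × Fin (m + n)) (Fin (m + n) × Fin (m + n)) ℚ :=
  ∑ c, xi m n c • (sg1 m n a c * sg2 m n (conj m n c) b)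

lemma conj_conj (a : Fin (m+n)) : conj m n (conj m n a) = a := by
  have ha := a.isLt
  unfold conj
  split_ifs with h1 h2 h2 <;>
    simp only [Fin.ext_iff, Fin.val_mk] at h2 ⊢ <;> omega

lemma gr_conj (a : Fin (m+n)) : gr m n (conj m n a) = gr m n a := by
  have ha := a.isLt
  unfold gr conj
  split_ifs with h1 h2 h2 <;>
    first | rfl | (simp only [Fin.val_mk] at h2; omega)

lemma xi_conj (hn : Even n) (a : Fin (m+n)) :
    xi m n (conj m n a) = (-1:ℚ)^(gr m n a) * xi m n a := by
  have ha := a.isLt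
  obtain ⟨k, hk⟩ := hn
  subst hk
  unfold xi gr conj
  split_ifs with h1 h2 h3 <;> simp only [Fin.val_mk] at *
  all_goals try norm_num
  all_goals omega

lemma gr01 (a : Fin (m+n)) : gr m n a = 0 ∨ gr m n a = 1 := by
  unfold gr; split_ifs <;> simp

lemma gmet_gr {a p : Fin (m+n)} (h : gmet m n a p ≠ 0) : gr m n a = gr m n p := by
  unfold gmet at h
  by_cases hc : a = conj m n p
  · rw [hc, gr_conj]
  · simp [hc] at h

lemma sg_apply (a b p q : Fin (m+n)) :
    sg m n a b p q = gmet m n a p * (if q = b then 1 else 0)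
      - (-1:ℚ)^(gr m n a * gr m n b) * (gmet m n b p * (if q = a then 1 else 0)) := by
  unfold sg
  simp only [Matrix.sub_apply, Matrix.sum_apply, Matrix.smul_apply, smul_eq_mul]
  simp only [E, mul_ite, mul_one, mul_zero, ite_and]
  rw [Finset.sum_ite_eq, Finset.sum_ite_eq]
  simp only [Finset.mem_univ, if_true]
  split_ifs <;> ring

lemma sg_antisym (a b : Fin (m+n)) :
    sg m n b a = -((-1:ℚ)^(gr m n a * gr m n b)) • sg m n a b := by
  ext p q
  rw [Matrix.smul_apply, sg_apply, sg_apply]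
  rcases gr01 m n a with h1 | h1 <;> rcases gr01 m n b with h2 | h2 <;>
    rw [h1, h2] <;> norm_num <;> split_ifs <;> ring

lemma mul12 (a c d b p q u v : Fin (m+n)) :
    (sg1 m n a c * sg2 m n d b) (p,q) (u,v)
      = (-1:ℚ)^((gr m n d + gr m n b) * gr m n u) * (sg m n a c p u * sg m n d b q v) := by
  rw [Matrix.mul_apply]
  simp only [sg1, sg2, gt, Fintype.sum_prod_type, Matrix.one_apply, mul_ite, ite_mul,
    mul_one, one_mul, mul_zero, zero_mul, pow_zero]
  rw [Finset.sum_comm]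
  simp [Finset.sum_ite_eq, Finset.sum_ite_eq']
  ring

lemma mul21 (b c d a p q u v : Fin (m+n)) :
    (sg2 m n b c * sg1 m n d a) (p,q) (u,v)
      = (-1:ℚ)^((gr m n b + gr m n c) * gr m n p) * (sg m n d a p u * sg m n b c q v) := by
  rw [Matrix.mul_apply]
  simp only [sg1, sg2, gt, Fintype.sum_prod_type, Matrix.one_apply, mul_ite, ite_mul,
    mul_one, one_mul, mul_zero, zero_mul, pow_zero]
  simp [Finset.sum_ite_eq, Finset.sum_ite_eq']
  ring

lemma sg_parity {a b p q : Fin (m+n)} (h : sg m n a b p q ≠ 0) :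
    (gr m n p + gr m n q) % 2 = (gr m n a + gr m n b) % 2 := by
  rw [sg_apply] at h
  by_cases h1 : gmet m n a p * (if q = b then (1:ℚ) else 0) ≠ 0
  · have hg : gmet m n a p ≠ 0 := fun hz => h1 (by rw [hz]; ring)
    have hq : q = b := by by_contra hq; exact h1 (by simp [hq])
    rw [gmet_gr m n hg, hq]
  · push_neg at h1
    have h2 : gmet m n b p * (if q = a then (1:ℚ) else 0) ≠ 0 := by
      intro hz; exact h (by rw [h1, hz]; ring)
    have hg : gmet m n b p ≠ 0 := fun hz => h2 (by rw [hz]; ring)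
    have hq : q = a := by by_contra hq; exact h2 (by simp [hq])
    rw [gmet_gr m n hg, hq]
    omega

lemma key (hn : Even n) (a b c p q u v : Fin (m+n)) :
    xi m n (conj m n c) *
      ((-1:ℚ)^((gr m n b + gr m n (conj m n c)) * gr m n p) *
        (sg m n (conj m n (conj m n c)) a p u * sg m n b (conj m n c) q v))
    = (-1:ℚ)^(gr m n a * gr m n b) *
      (xi m n c *
        ((-1:ℚ)^((gr m n (conj m n c) + gr m n b) * gr m n u) *
          (sg m n a c p u * sg m n (conj m n c) b q v))) := by
  rw [conj_conj, gr_conj, xi_conj m n hn]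
  have h1 : sg m n c a = -((-1:ℚ)^(gr m n a * gr m n c)) • sg m n a c := sg_antisym m n a c
  have h2 : sg m n b (conj m n c)
      = -((-1:ℚ)^(gr m n (conj m n c) * gr m n b)) • sg m n (conj m n c) b :=
    sg_antisym m n (conj m n c) b
  rw [h1, h2, gr_conj, Matrix.smul_apply, Matrix.smul_apply]
  simp only [smul_eq_mul]
  by_cases hX : sg m n a c p u * sg m n (conj m n c) b q v = 0
  · rcases mul_eq_zero.mp hX with h | h <;> rw [h] <;> ring
  · have hp : (gr m n p + gr m n u) % 2 = (gr m n a + gr m n c) % 2 :=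
      sg_parity m n (fun hz => hX (by rw [hz]; ring))
    rcases gr01 m n a with ha | ha <;> rcases gr01 m n b with hb | hb <;>
      rcases gr01 m n c with hc | hc <;> rcases gr01 m n p with hgp | hgp <;>
      rcases gr01 m n u with hu | hu <;>
      simp only [ha, hb, hc, hgp, hu] at hp ⊢ <;> first | omega | (norm_num; try ring)


/-- (σ₂σ₁)^{ba} = (−1)^{[a][b]} (σ₁σ₂)^{ab}, where
(σ₂σ₁)^{ba} = Σ_c ξ_c σ₂^{bc} σ₁^{c̄a} and (σ₁σ₂)^{ab} = Σ_c ξ_c σ₁^{ac} σ₂^{c̄b}. -/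
theorem S21_eq_sign_S12 (m n : ℕ) (hn : Even n) (a b : Fin (m + n)) :
    (∑ c, xi m n c • (sg2 m n b c * sg1 m n (conj m n c) a))
      = ((-1 : ℚ) ^ (gr m n a * gr m n b)) • S12 m n a b := by
  ext ⟨p, q⟩ ⟨u, v⟩
  simp only [S12, Matrix.sum_apply, Matrix.smul_apply, smul_eq_mul, mul21, mul12,
    Finset.mul_sum]
  have hs := Equiv.sum_comp (⟨conj m n, conj m n, conj_conj m n, conj_conj m n⟩ :
    Fin (m+n) ≃ Fin (m+n)) (fun c => xi m n c *
    ((-1:ℚ)^((gr m n b + gr m n c) * gr m n p) * (sg m n (conj m n c) a p u * sg m n b c q v)))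
  rw [← hs]
  refine Finset.sum_congr rfl fun c _ => ?_
  have hk := key m n hn a b c p q u v
  simpa [Equiv.coe_fn_mk] using hk

end OSP
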